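/- In a Kripke structure K with total transition relation, for k ≥ 1 and a formula φ not containing the fresh propositions p_1,…,p_k, the state x satisfies E_{≥k}X φ := ∃p_1…∃p_k.( ⋀_{1≤i≤k} EX(p_i ∧ ⋀_{i'≠i} ¬p_{i'}) ∧ AX((⋁_{1≤i≤k} p_i) → φ) ) if and only if x has at least k distinct E-successors satisfying φ. -/

import Mathlib

/-- `E_{≥k}X φ := ∃p_1…∃p_k.( ⋀_i EX(p_i ∧ ⋀_{i'≠i} ¬p_{i'}) ∧ AX((⋁_i p_i) → φ) )`
holds at `x` iff `x` has at least `k` distinct `E`-successors satisfying `φ`.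
The fresh propositions `p_1,…,p_k` range over arbitrary labellings, and `φ` is
independent of them. -/
theorem at_least_k_successors_iff {V : Type*} [Fintype V] [DecidableEq V]
    (E : V → V → Prop) (hE : ∀ v, ∃ w, E v w) (φ : V → Prop)
    (k : ℕ) (hk : 1 ≤ k) (x : V) :
    (∃ P : Fin k → V → Prop,
      (∀ i, ∃ y, E x y ∧ P i y ∧ ∀ i', i' ≠ i → ¬ P i' y) ∧
      (∀ y, E x y → (∃ i, P i y) → φ y)) ↔
    (∃ s : Finset V, k ≤ s.card ∧ ∀ y ∈ s, E x y ∧ φ y) := by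
  constructor
  · rintro ⟨P, hEX, hAX⟩
    choose f hEf hPf hnot using hEX
    have hinj : Function.Injective f := by
      intro i j hij
      by_contra hne
      exact hnot i j (fun h => hne h.symm) (hij ▸ hPf j)
    refine ⟨Finset.univ.image f, ?_, ?_⟩
    · rw [Finset.card_image_of_injective _ hinj, Finset.card_univ, Fintype.card_fin]
    · intro y hy
      simp only [Finset.mem_image, Finset.mem_univ, true_and] at hy
      obtain ⟨i, rfl⟩ := hy
      exact ⟨hEf i, hAX _ (hEf i) ⟨i, hPf i⟩⟩
  · rintro ⟨s, hcard, hs⟩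
    obtain ⟨t, hts, htcard⟩ := Finset.exists_subset_card_eq hcard
    have : Fintype.card (Fin k) ≤ Fintype.card t := by
      simp [htcard]
    obtain ⟨g, hg⟩ := Function.Embedding.nonempty_of_card_le this
    refine ⟨fun i y => y = (g i : V), ?_, ?_⟩
    · intro i
      refine ⟨g i, (hs _ (hts (g i).2)).1, rfl, ?_⟩
      intro i' hi' h
      exact hi' (hg.injOn.eq_iff (Set.mem_univ _) (Set.mem_univ _) |>.mp
        (Subtype.ext h) ▸ rfl)
    · rintro y _ ⟨i, rfl⟩
      exact (hs _ (hts (g i).2)).2
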